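/- arXiv:2212.14303 — 4 statements merged into one kernel-verified Lean document; each statement's English description precedes it below -/
import Mathlib

section
/- Let λ > 0, α > 0 and n be a positive integer. Then for every t > 0, the n-th derivative of t ↦ E_{α,1}(−λ t^α) satisfies (d^n/dt^n) E_{α,1}(−λ t^α) = −λ t^{α−n} E_{α,α−n+1}(−λ t^α). -/
/-- The Mittag-Leffler function `E_{α,β}(z) = ∑_{k=0}^∞ z^k / Γ(αk+β)`.
(In Lean, `Real.Gamma` vanishes at the poles of `Γ`, and division by zero is zero,
so the summand is interpreted as `0` there.) -/
noncomputable def mittagLeffler (α β z : ℝ) : ℝ :=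
  ∑' k : ℕ, z ^ k / Real.Gamma (α * k + β)

open Filter Topology

/-- Auxiliary: factorials eventually dominate any geometric sequence. -/
lemma ml_factorial_ge (D : ℝ) (hD : 1 ≤ D) : ∃ N : ℕ, ∀ n : ℕ, N ≤ n → D ^ n ≤ (Nat.factorial n : ℝ) := by
  set m := ⌈D ^ 2⌉₊ with hm
  refine ⟨2 * m, fun n hn => ?_⟩
  have hmn : m ≤ n := by omega
  have hD0 : (0:ℝ) ≤ D := by linarith
  calc D ^ n ≤ D ^ (2 * (n - m)) := pow_le_pow_right₀ hD (by omega)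
    _ = (D ^ 2) ^ (n - m) := by rw [pow_mul]
    _ ≤ ((m + 1 : ℕ) : ℝ) ^ (n - m) := by
        apply pow_le_pow_left₀ (by positivity)
        calc D ^ 2 ≤ (m : ℝ) := Nat.le_ceil _
          _ ≤ ((m + 1 : ℕ) : ℝ) := by push_cast; linarith
    _ ≤ ((Nat.factorial n : ℕ) : ℝ) := by
        have : (m + 1) ^ (n - m) ≤ Nat.factorial n := by
          calc (m + 1) ^ (n - m) ≤ Nat.factorial m * (m + 1) ^ (n - m) :=
                Nat.le_mul_of_pos_left _ m.factorial_pos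
            _ ≤ Nat.factorial (m + (n - m)) := Nat.factorial_mul_pow_le_factorial
            _ = Nat.factorial n := by rw [Nat.add_sub_cancel' hmn]
        exact_mod_cast this

/-- Auxiliary: summability of `R^k / |Γ(αk+δ)|`. -/
lemma ml_summable_inv_gamma (α δ R : ℝ) (hα : 0 < α) (hR : 0 < R) :
    Summable (fun k : ℕ => R ^ k / |Real.Gamma (α * k + δ)|) := by
  set C := max (2 * R) 1 with hCdef
  have hC1 : (1:ℝ) ≤ C := le_max_right _ _
  have hC0 : (0:ℝ) < C := lt_of_lt_of_le one_pos hC1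
  set D := C ^ (2 / α) with hDdef
  have hD1 : (1:ℝ) ≤ D := by
    have := Real.rpow_le_rpow_of_exponent_le hC1 (show (0:ℝ) ≤ 2 / α by positivity)
    rwa [Real.rpow_zero] at this
  obtain ⟨N, hN⟩ := ml_factorial_ge D hD1
  have hx_t : Tendsto (fun k : ℕ => α * k + δ) atTop atTop := by
    apply tendsto_atTop_add_const_right
    exact Tendsto.const_mul_atTop hα tendsto_natCast_atTop_atTop
  have hev : ∀ᶠ k : ℕ in atTop, R ^ k / |Real.Gamma (α * k + δ)| ≤ (1/2 : ℝ) ^ k := by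
    filter_upwards [hx_t.eventually_ge_atTop 2, hx_t.eventually_ge_atTop (N + 2 : ℝ),
      hx_t.eventually_ge_atTop (4 - δ)] with k h2 hN2 h4
    set x := α * (k:ℝ) + δ with hx
    have key : C ^ k ≤ Real.Gamma x := by
      set m := ⌊x⌋₊ with hmdef
      have hx0 : (0:ℝ) ≤ x := by linarith
      have hmx : (m : ℝ) ≤ x := Nat.floor_le hx0
      have hm2 : 2 ≤ m := Nat.le_floor (by exact_mod_cast h2)
      have hxm : x - 1 < (m : ℝ) := Nat.sub_one_lt_floor x
      have h1m : 1 ≤ m := by omega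
      have hcast : ((m - 1 : ℕ) : ℝ) = (m : ℝ) - 1 := by
        push_cast [Nat.cast_sub h1m]; ring
      have hGam : (Nat.factorial (m - 1) : ℝ) ≤ Real.Gamma x := by
        have hmono : Real.Gamma (m : ℝ) ≤ Real.Gamma x :=
          Real.Gamma_strictMonoOn_Ici.monotoneOn (Set.mem_Ici.mpr (by exact_mod_cast hm2))
            (Set.mem_Ici.mpr h2) hmx
        rwa [show ((m : ℕ) : ℝ) = ((m - 1 : ℕ) : ℝ) + 1 by rw [hcast]; ring,
          Real.Gamma_nat_eq_factorial] at hmono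
      have hNm : N ≤ m - 1 := by
        have h1 : ((N + 1 : ℕ) : ℝ) < (m : ℝ) := by push_cast; linarith
        have := Nat.cast_lt.mp h1
        omega
      have hfac : D ^ (m - 1) ≤ (Nat.factorial (m - 1) : ℝ) := hN _ hNm
      have hD2 : D ^ (x - 2) ≤ D ^ (((m - 1 : ℕ) : ℝ)) :=
        Real.rpow_le_rpow_of_exponent_le hD1 (by rw [hcast]; linarith)
      have hCk : C ^ k ≤ D ^ (x - 2) := by
        rw [← Real.rpow_natCast C k, hDdef, ← Real.rpow_mul hC0.le]
        apply Real.rpow_le_rpow_of_exponent_le hC1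
        rw [div_mul_eq_mul_div, le_div_iff₀ hα]
        have : α * (k:ℝ) = x - δ := by rw [hx]; ring
        nlinarith
      calc C ^ k ≤ D ^ (x - 2) := hCk
        _ ≤ D ^ (((m - 1 : ℕ) : ℝ)) := hD2
        _ = D ^ (m - 1) := Real.rpow_natCast D (m - 1)
        _ ≤ (Nat.factorial (m - 1) : ℝ) := hfac
        _ ≤ Real.Gamma x := hGam
    have hGpos : 0 < Real.Gamma x := lt_of_lt_of_le (pow_pos hC0 k) key
    rw [abs_of_pos hGpos]
    calc R ^ k / Real.Gamma x ≤ R ^ k / C ^ k := by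
          apply div_le_div_of_nonneg_left (by positivity) (pow_pos hC0 k) key
      _ = (R / C) ^ k := by rw [div_pow]
      _ ≤ (1/2 : ℝ) ^ k := by
          apply pow_le_pow_left₀ (by positivity)
          rw [div_le_div_iff₀ hC0 (by norm_num)]
          calc R * 2 = 2 * R := by ring
            _ ≤ C := le_max_left _ _
            _ = 1 * C := by ring
  obtain ⟨K, hK⟩ := eventually_atTop.mp hev
  rw [← summable_nat_add_iff K]
  apply Summable.of_nonneg_of_le (fun k => by positivity)
    (fun k => hK (k + K) (by omega))
  apply Summable.congr (f := fun k : ℕ => (1/2:ℝ)^K * (1/2:ℝ)^k)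
  · exact (summable_geometric_of_lt_one (by norm_num) (by norm_num)).mul_left _
  · intro k; rw [← pow_add]; ring_nf

noncomputable def mlG (α lam γ : ℝ) (s : ℝ) : ℝ :=
  ∑' k : ℕ, (-lam) ^ k * s ^ (α * k + γ) / Real.Gamma (α * k + γ + 1)

lemma ml_gamma_ratio (c : ℝ) : c / Real.Gamma (c + 1) = 1 / Real.Gamma c := by
  rcases eq_or_ne c 0 with rfl | hc
  · simp [Real.Gamma_zero]
  · rw [Real.Gamma_add_one hc]
    rcases eq_or_ne (Real.Gamma c) 0 with h | h
    · simp [h]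
    · field_simp

lemma ml_rpow_nat_mul {x : ℝ} (hx : 0 ≤ x) (α : ℝ) (k : ℕ) :
    x ^ (α * (k:ℝ)) = (x ^ α) ^ k := by
  rw [Real.rpow_mul hx, Real.rpow_natCast]

lemma ml_rpow_le_max {a b x p : ℝ} (ha : 0 < a) (hax : a ≤ x) (hxb : x ≤ b) :
    x ^ p ≤ max (a ^ p) (b ^ p) := by
  have hx : 0 < x := lt_of_lt_of_le ha hax
  rcases le_or_gt 0 p with hp | hp
  · exact le_max_of_le_right (Real.rpow_le_rpow hx.le hxb hp)
  · apply le_max_of_le_left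
    rw [Real.rpow_def_of_pos hx, Real.rpow_def_of_pos ha]
    apply Real.exp_le_exp.mpr
    have := Real.log_le_log ha hax
    nlinarith
    
lemma ml_term_norm (α lam γ : ℝ) (hlam : 0 < lam) (k : ℕ) {x : ℝ} (hx : 0 < x) :
    ‖(-lam) ^ k * x ^ (α * k + γ) / Real.Gamma (α * k + γ + 1)‖
      = (lam * x ^ α) ^ k * x ^ γ / |Real.Gamma (α * k + γ + 1)| := by
  rw [Real.norm_eq_abs, abs_div, abs_mul, abs_pow, abs_neg, abs_of_pos hlam,
    abs_of_pos (Real.rpow_pos_of_pos hx _), Real.rpow_add hx, ml_rpow_nat_mul hx.le, mul_pow]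
  ring_nf

lemma ml_term_bound (α lam γ : ℝ) (hα : 0 < α) (hlam : 0 < lam) {a b : ℝ} (ha : 0 < a) (k : ℕ)
    {x : ℝ} (hx : x ∈ Set.Ioo a b) :
    ‖(-lam) ^ k * x ^ (α * k + γ) / Real.Gamma (α * k + γ + 1)‖
      ≤ (lam * b ^ α) ^ k * max (a ^ γ) (b ^ γ) / |Real.Gamma (α * k + γ + 1)| := by
  have hx0 : 0 < x := lt_of_lt_of_le ha hx.1.le
  rw [ml_term_norm α lam γ hlam k hx0, div_eq_mul_inv, div_eq_mul_inv]
  apply mul_le_mul_of_nonneg_right _ (by positivity)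
  apply mul_le_mul
  · apply pow_le_pow_left₀ (by positivity)
    have : x ^ α ≤ b ^ α := Real.rpow_le_rpow hx0.le hx.2.le hα.le
    nlinarith
  · exact ml_rpow_le_max ha hx.1.le hx.2.le
  · exact Real.rpow_nonneg hx0.le _
  · have hb0 : 0 < b := lt_trans hx0 hx.2
    exact pow_nonneg (mul_nonneg hlam.le (Real.rpow_nonneg hb0.le α)) k

lemma ml_summable_term (α lam γ : ℝ) (hα : 0 < α) (hlam : 0 < lam) {x : ℝ} (hx : 0 < x) :
    Summable (fun k : ℕ => (-lam) ^ k * x ^ (α * k + γ) / Real.Gamma (α * k + γ + 1)) := by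
  apply Summable.of_norm
  have hs : Summable (fun k : ℕ => x ^ γ * ((lam * x ^ α) ^ k / |Real.Gamma (α * k + (γ + 1))|)) :=
    (ml_summable_inv_gamma α (γ + 1) (lam * x ^ α) hα
      (by positivity)).mul_left _
  apply hs.congr
  intro k
  rw [ml_term_norm α lam γ hlam k hx, ← add_assoc]
  ring

lemma ml_summable_bound (α lam γ : ℝ) (hα : 0 < α) (hlam : 0 < lam) {a b : ℝ}
    (ha : 0 < a) (hb : 0 < b) :
    Summable (fun k : ℕ =>
      (lam * b ^ α) ^ k * max (a ^ γ) (b ^ γ) / |Real.Gamma (α * k + γ + 1)|) := by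
  have hs : Summable (fun k : ℕ =>
      max (a ^ γ) (b ^ γ) * ((lam * b ^ α) ^ k / |Real.Gamma (α * k + (γ + 1))|)) :=
    (ml_summable_inv_gamma α (γ + 1) (lam * b ^ α) hα (by positivity)).mul_left _
  apply hs.congr
  intro k
  rw [← add_assoc]
  ring

lemma ml_hasDerivAt_term (α lam γ : ℝ) (k : ℕ) {x : ℝ} (hx : 0 < x) :
    HasDerivAt (fun s : ℝ => (-lam) ^ k * s ^ (α * k + γ) / Real.Gamma (α * k + γ + 1))
      ((-lam) ^ k * x ^ (α * k + (γ - 1)) / Real.Gamma (α * k + (γ - 1) + 1)) x := by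
  have h := Real.hasDerivAt_rpow_const (x := x) (p := α * k + γ) (Or.inl hx.ne')
  have h2 := (h.const_mul ((-lam) ^ k)).div_const (Real.Gamma (α * k + γ + 1))
  refine h2.congr_deriv (Eq.symm ?_)
  rw [show α * (k:ℝ) + (γ - 1) + 1 = α * k + γ by ring,
    show α * (k:ℝ) + (γ - 1) = α * k + γ - 1 by ring]
  set e := α * (k:ℝ) + γ
  have key := ml_gamma_ratio e
  calc (-lam) ^ k * x ^ (e - 1) / Real.Gamma e
      = (-lam) ^ k * x ^ (e - 1) * (1 / Real.Gamma e) := by ring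
    _ = (-lam) ^ k * x ^ (e - 1) * (e / Real.Gamma (e + 1)) := by rw [key]
    _ = (-lam) ^ k * (e * x ^ (e - 1)) / Real.Gamma (e + 1) := by ring

lemma ml_hasDerivAt_mlG (α lam γ : ℝ) (hα : 0 < α) (hlam : 0 < lam) {t : ℝ} (ht : 0 < t) :
    HasDerivAt (mlG α lam γ) (mlG α lam (γ - 1) t) t := by
  have ha : (0:ℝ) < t / 2 := by linarith
  have hb : (0:ℝ) < 2 * t := by linarith
  have hts : t ∈ Set.Ioo (t/2) (2*t) := ⟨by linarith, by linarith⟩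
  apply hasDerivAt_of_tendstoUniformlyOn (l := atTop) (f := fun (N : ℕ) (x : ℝ) =>
      ∑ k ∈ Finset.range N, (-lam) ^ k * x ^ (α * k + γ) / Real.Gamma (α * k + γ + 1))
    (f' := fun (N : ℕ) (x : ℝ) =>
      ∑ k ∈ Finset.range N, (-lam) ^ k * x ^ (α * k + (γ - 1)) / Real.Gamma (α * k + (γ - 1) + 1))
    isOpen_Ioo _ _ _ hts
  · exact tendstoUniformlyOn_tsum_nat (ml_summable_bound α lam (γ - 1) hα hlam ha hb)
      (fun k x hx => ml_term_bound α lam (γ - 1) hα hlam ha k hx)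
  · apply Eventually.of_forall
    intro N x hx
    exact HasDerivAt.fun_sum (fun k _ => ml_hasDerivAt_term α lam γ k (lt_trans ha hx.1))
  · intro x hx
    exact (ml_summable_term α lam γ hα hlam (lt_trans ha hx.1)).hasSum.tendsto_sum_nat

lemma ml_iteratedDeriv_mlG (α lam γ : ℝ) (hα : 0 < α) (hlam : 0 < lam) (m : ℕ) :
    ∀ t : ℝ, 0 < t → iteratedDeriv m (mlG α lam γ) t = mlG α lam (γ - m) t := by
  induction m with
  | zero => intro t ht; simp [iteratedDeriv_zero]
  | succ m ih =>
    intro t ht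
    rw [iteratedDeriv_succ]
    have hev : iteratedDeriv m (mlG α lam γ) =ᶠ[𝓝 t] mlG α lam (γ - m) :=
      eventuallyEq_of_mem (Ioi_mem_nhds ht) (fun s hs => ih s hs)
    rw [hev.deriv_eq, (ml_hasDerivAt_mlG α lam (γ - m) hα hlam ht).deriv]
    congr 1
    push_cast
    ring

lemma mlG_def (α lam γ s : ℝ) : mlG α lam γ s =
    ∑' k : ℕ, (-lam) ^ k * s ^ (α * k + γ) / Real.Gamma (α * k + γ + 1) := rfl

/-- For `λ > 0`, `α > 0`, a positive integer `n`, and every `t > 0`,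
`(d^n/dt^n) E_{α,1}(−λ t^α) = −λ t^{α−n} E_{α,α−n+1}(−λ t^α)`. -/
theorem mittagLeffler_iteratedDeriv (α lam : ℝ) (hα : 0 < α) (hlam : 0 < lam)
    (n : ℕ) (hn : 0 < n) (t : ℝ) (ht : 0 < t) :
    iteratedDeriv n (fun s : ℝ => mittagLeffler α 1 (-(lam * s ^ α))) t
      = -lam * t ^ (α - n) * mittagLeffler α (α - n + 1) (-(lam * t ^ α)) := by
  have hfun : (fun s : ℝ => mittagLeffler α 1 (-(lam * s ^ α))) =ᶠ[𝓝 t] mlG α lam 0 := by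
    apply eventuallyEq_of_mem (Ioi_mem_nhds ht)
    intro s hs
    have hs0 : (0:ℝ) < s := hs
    rw [mlG_def]; unfold mittagLeffler
    apply tsum_congr; intro k
    simp only [add_zero]
    rw [show (-(lam * s ^ α)) = (-lam) * s ^ α by ring, mul_pow, ← ml_rpow_nat_mul hs0.le]
  rw [hfun.iteratedDeriv_eq n, ml_iteratedDeriv_mlG α lam 0 hα hlam n t ht, mlG_def]
  unfold mittagLeffler
  rw [Summable.tsum_eq_zero_add (ml_summable_term α lam (0 - n) hα hlam ht)]
  have h0 : (-lam) ^ (0:ℕ) * t ^ (α * ((0:ℕ):ℝ) + (0 - (n:ℝ))) /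
      Real.Gamma (α * ((0:ℕ):ℝ) + (0 - (n:ℝ)) + 1) = 0 := by
    rw [show α * ((0:ℕ):ℝ) + (0 - (n:ℝ)) + 1 = -(((n - 1 : ℕ)):ℝ) by
      push_cast [Nat.cast_sub hn]; ring, Real.Gamma_neg_nat_eq_zero, div_zero]
  rw [h0, zero_add, ← tsum_mul_left]
  apply tsum_congr; intro j
  push_cast
  rw [show α * ((j:ℝ)+1) + (0 - (n:ℝ)) = (α - n) + α * j by ring,
    Real.rpow_add ht, show α - (n:ℝ) + α * j + 1 = α * j + (α - n + 1) by ring,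
    show (-(lam * t ^ α)) = (-lam) * t ^ α by ring, mul_pow, ← ml_rpow_nat_mul ht.le,
    pow_succ]
  ring
end

section
/- Let α > 0, λ > 0 and t ≥ 0. Then (1/Γ(α)) ∫₀ᵗ (t−τ)^{α−1} E_{α,1}(−λ τ^α) dτ = λ^{−1}(1 − E_{α,1}(−λ t^α)); that is, I^α applied to τ ↦ E_{α,1}(−λ τ^α) equals λ^{−1}(1 − E_{α,1}(−λ t^α)). -/
open Real MeasureTheory Filter Set intervalIntegral

private lemma gamma_step {a y : ℝ} (ha : 0 < a) (ha1 : a ≤ 1) (hy : 1 ≤ y) (hay : a ≤ y) :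
    Real.Gamma y * y ^ a / 2 ≤ Real.Gamma (y + a) := by
  have hy0 : (0:ℝ) < y := lt_of_lt_of_le one_pos hy
  have hya : (0:ℝ) < y + a := by linarith
  have hG : 0 < Real.Gamma y := Real.Gamma_pos_of_pos hy0
  have hGa : 0 < Real.Gamma (y + a) := Real.Gamma_pos_of_pos hya
  have hconv := Real.convexOn_log_Gamma.2 (Set.mem_Ioi.mpr hya)
    (Set.mem_Ioi.mpr (by linarith : (0:ℝ) < y + a + 1)) ha.le
    (by linarith : (0:ℝ) ≤ 1 - a) (by ring)
  have hcomb : a • (y + a) + (1 - a) • (y + a + 1) = y + 1 := by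
    simp only [smul_eq_mul]; ring
  rw [hcomb] at hconv
  simp only [Function.comp, smul_eq_mul] at hconv
  have e1 : Real.Gamma (y + 1) = y * Real.Gamma y := Real.Gamma_add_one hy0.ne'
  have e2 : Real.Gamma (y + a + 1) = (y + a) * Real.Gamma (y + a) := Real.Gamma_add_one hya.ne'
  rw [e1, e2, Real.log_mul hy0.ne' hG.ne', Real.log_mul hya.ne' hGa.ne'] at hconv
  have key : Real.log y + Real.log (Real.Gamma y) + (a - 1) * Real.log (y + a)
      ≤ Real.log (Real.Gamma (y + a)) := by nlinarith [hconv]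
  have hexp : y * Real.Gamma y * (y + a) ^ (a - 1) ≤ Real.Gamma (y + a) := by
    have h2 := Real.exp_le_exp.mpr key
    rw [Real.exp_log hGa, Real.exp_add, Real.exp_add, Real.exp_log hy0, Real.exp_log hG] at h2
    rwa [Real.rpow_def_of_pos hya, mul_comm (Real.log (y + a))]
  have h3 : (2 * y) ^ (a - 1) ≤ (y + a) ^ (a - 1) :=
    Real.rpow_le_rpow_of_nonpos hya (by linarith) (by linarith)
  have h4 : (2 * y) ^ (a - 1) = 2 ^ (a - 1) * y ^ (a - 1) :=
    Real.mul_rpow (by norm_num) hy0.le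
  have h5 : (2:ℝ) ^ (-1:ℝ) ≤ (2:ℝ) ^ (a - 1) :=
    Real.rpow_le_rpow_of_exponent_le one_le_two (by linarith)
  have h6 : (2:ℝ) ^ (-1:ℝ) = 1/2 := by
    rw [Real.rpow_neg_one]; norm_num
  have h7 : y * y ^ (a - 1) = y ^ a := by
    rw [mul_comm, ← Real.rpow_add_one hy0.ne' (a-1)]
    norm_num
  have h8 : 0 < y ^ (a - 1) := Real.rpow_pos_of_pos hy0 _
  nlinarith [mul_le_mul_of_nonneg_left (h3.trans' (by rw [h4, ← h6]; exact mul_le_mul_of_nonneg_right h5 h8.le : (1/2) * y ^ (a-1) ≤ (2*y) ^ (a-1))) (by positivity : (0:ℝ) ≤ y * Real.Gamma y)]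

private lemma gamma_lb (n : ℕ) : ∀ a : ℝ, 0 < a → a ≤ n → ∀ y : ℝ, 1 ≤ y → a ≤ y →
    Real.Gamma y * y ^ a / 2 ≤ Real.Gamma (y + a) := by
  induction n with
  | zero =>
    intro a ha han y _ _
    exact absurd (ha.trans_le han) (by norm_num)
  | succ n ih =>
    intro a ha han y hy hay
    have hy0 : (0:ℝ) < y := lt_of_lt_of_le one_pos hy
    have hG : 0 < Real.Gamma y := Real.Gamma_pos_of_pos hy0
    rcases le_or_gt a 1 with h1 | h1
    · exact gamma_step ha h1 hy hay
    · have ha' : 0 < a - 1 := by linarith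
      have han' : a - 1 ≤ n := by
        push_cast at han ⊢; linarith
      have IH := ih (a - 1) ha' han' y hy (by linarith)
      have hrw : y + a = y + (a - 1) + 1 := by ring
      have hpos : (0:ℝ) < y + (a - 1) := by linarith
      rw [hrw, Real.Gamma_add_one hpos.ne']
      have h7 : y ^ a = y ^ (a - 1) * y := by
        rw [← Real.rpow_add_one hy0.ne' (a-1)]
        norm_num
      have h8 : 0 < y ^ (a - 1) := Real.rpow_pos_of_pos hy0 _
      have hGp : 0 < Real.Gamma (y + (a-1)) := Real.Gamma_pos_of_pos hpos
      nlinarith [mul_le_mul_of_nonneg_left IH (by linarith : (0:ℝ) ≤ y + (a-1))]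

private lemma summable_gamma_ml {a : ℝ} (ha : 0 < a) (b x : ℝ) :
    Summable (fun k : ℕ => x ^ k / Real.Gamma (a * k + b)) := by
  refine summable_of_ratio_norm_eventually_le (r := 1/2) (by norm_num) ?_
  have h1 : Tendsto (fun k : ℕ => a * (k:ℝ) + b) atTop atTop :=
    tendsto_atTop_add_const_right _ b (Tendsto.const_mul_atTop ha tendsto_natCast_atTop_atTop)
  have h2 : Tendsto (fun k : ℕ => (a * (k:ℝ) + b) ^ a) atTop atTop :=
    (tendsto_rpow_atTop ha).comp h1
  filter_upwards [h1.eventually_ge_atTop (max 1 a), h2.eventually_ge_atTop (4 * |x| + 1)]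
    with k hk1 hk2
  have hy1 : (1:ℝ) ≤ a * k + b := le_trans (le_max_left _ _) hk1
  have hya : a ≤ a * k + b := le_trans (le_max_right _ _) hk1
  have hG : 0 < Real.Gamma (a * k + b) := Real.Gamma_pos_of_pos (by linarith)
  have hstep := gamma_lb ⌈a⌉₊ a ha (Nat.le_ceil a) _ hy1 hya
  have hGa : 0 < Real.Gamma (a * k + b + a) := Real.Gamma_pos_of_pos (by linarith)
  have hyaeq : a * ((k:ℝ) + 1) + b = a * k + b + a := by ring
  rw [Nat.cast_succ, hyaeq, norm_div, norm_div, norm_pow, norm_pow, Real.norm_eq_abs x,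
    Real.norm_eq_abs, Real.norm_eq_abs, abs_of_pos hG, abs_of_pos hGa, mul_div_assoc',
    div_le_div_iff₀ hGa hG]
  have hxk : (0:ℝ) ≤ |x| ^ k := pow_nonneg (abs_nonneg x) k
  have h3 : |x| * Real.Gamma (a * k + b) * 2 ≤ Real.Gamma (a * k + b + a) := by
    nlinarith [mul_nonneg hG.le (by linarith : (0:ℝ) ≤ (a * k + b) ^ a - (4 * |x| + 1))]
  have h4 := mul_le_mul_of_nonneg_left h3 hxk
  rw [pow_succ]
  nlinarith [h4]

private lemma beta_integrable {c d T : ℝ} (hc : -1 < c) (hd : -1 < d) (hT : 0 < T) :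
    IntervalIntegrable (fun x => x ^ c * (T - x) ^ d) volume 0 T := by
  apply IntervalIntegrable.trans (b := T/2)
  · apply IntervalIntegrable.mul_continuousOn (intervalIntegrable_rpow' hc)
    apply ContinuousOn.rpow_const ((continuous_const.sub continuous_id).continuousOn)
    intro x hx
    rw [Set.uIcc_of_le (by linarith : (0:ℝ) ≤ T/2)] at hx
    left
    have := hx.2
    intro h; have h' : T - x = 0 := h; linarith
  · have h1 : IntervalIntegrable (fun x => (T - x) ^ d) volume (T/2) T := by
      have h0 : IntervalIntegrable (fun x : ℝ => x ^ d) volume (T - T/2) (T - T) :=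
        intervalIntegrable_rpow' hd
      simpa using h0.comp_sub_left T
    apply IntervalIntegrable.continuousOn_mul h1
    apply ContinuousOn.rpow_const continuousOn_id
    intro x hx
    rw [Set.uIcc_of_le (by linarith : T/2 ≤ T)] at hx
    left
    have := hx.1
    simp only [id]
    intro h; rw [h] at this; linarith

private lemma beta_value {c d T : ℝ} (hc : -1 < c) (hd : -1 < d) (hT : 0 < T) :
    ∫ x in (0:ℝ)..T, x ^ c * (T - x) ^ d
      = Real.Gamma (c+1) * Real.Gamma (d+1) / Real.Gamma (c+d+2) * T ^ (c+d+1) := by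
  have hs : (0:ℝ) < c + 1 := by linarith
  have ht' : (0:ℝ) < d + 1 := by linarith
  have hC := Complex.betaIntegral_scaled (c+1) (d+1) hT
  have hG := Complex.Gamma_mul_Gamma_eq_betaIntegral
    (s := (c:ℂ)+1) (t := (d:ℂ)+1) (by simpa using hs) (by simpa using ht')
  have hGne : Complex.Gamma ((c:ℂ)+1+((d:ℂ)+1)) ≠ 0 := by
    apply Complex.Gamma_ne_zero_of_re_pos
    simp only [Complex.add_re, Complex.ofReal_re, Complex.one_re]
    linarith
  have hBeta : Complex.betaIntegral ((c:ℂ)+1) ((d:ℂ)+1)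
      = Complex.Gamma ((c:ℂ)+1) * Complex.Gamma ((d:ℂ)+1) / Complex.Gamma ((c:ℂ)+1+((d:ℂ)+1)) := by
    field_simp [hG]
    rw [hG]; ring
  rw [hBeta] at hC
  -- convert LHS of hC to a real integral
  have hL : (∫ x in (0:ℝ)..T, (x:ℂ) ^ ((c:ℂ)+1-1) * ((T:ℂ) - x) ^ ((d:ℂ)+1-1))
      = ((∫ x in (0:ℝ)..T, x ^ c * (T - x) ^ d : ℝ) : ℂ) := by
    rw [← intervalIntegral.integral_ofReal]
    apply intervalIntegral.integral_congr
    intro x hx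
    rw [Set.uIcc_of_le hT.le] at hx
    dsimp only
    rw [add_sub_cancel_right, add_sub_cancel_right, Complex.ofReal_mul,
      Complex.ofReal_cpow hx.1, Complex.ofReal_cpow (by linarith [hx.2] : (0:ℝ) ≤ T - x),
      Complex.ofReal_sub]
  rw [hL] at hC
  have hR : ((T:ℂ)) ^ ((c:ℂ)+1+((d:ℂ)+1)-1) * (Complex.Gamma ((c:ℂ)+1) * Complex.Gamma ((d:ℂ)+1) / Complex.Gamma ((c:ℂ)+1+((d:ℂ)+1)))
      = ((Real.Gamma (c+1) * Real.Gamma (d+1) / Real.Gamma (c+d+2) * T ^ (c+d+1) : ℝ) : ℂ) := by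
    have e1 : ((c:ℂ)+1+((d:ℂ)+1)-1) = ((c+d+1 : ℝ) : ℂ) := by push_cast; ring
    have e2 : ((c:ℂ)+1+((d:ℂ)+1)) = ((c+d+2 : ℝ) : ℂ) := by push_cast; ring
    have e3 : ((c:ℂ)+1) = ((c+1 : ℝ) : ℂ) := by push_cast; ring
    have e4 : ((d:ℂ)+1) = ((d+1 : ℝ) : ℂ) := by push_cast; ring
    rw [e1, e2, e3, e4, Complex.Gamma_ofReal, Complex.Gamma_ofReal, Complex.Gamma_ofReal,
      ← Complex.ofReal_cpow hT.le]
    push_cast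
    ring
  rw [hR] at hC
  exact_mod_cast hC

/-- For `α > 0`, `λ > 0` and `t ≥ 0`,
`(1/Γ(α)) ∫₀ᵗ (t−τ)^{α−1} E_{α,1}(−λ τ^α) dτ = λ⁻¹ (1 − E_{α,1}(−λ t^α))`. -/
theorem RL_integral_mittagLeffler_one (α lam t : ℝ) (hα : 0 < α) (hlam : 0 < lam)
    (ht : 0 ≤ t) :
    (1 / Real.Gamma α) * ∫ τ in (0:ℝ)..t, (t - τ) ^ (α - 1) * mittagLeffler α 1 (-(lam * τ ^ α))
      = lam⁻¹ * (1 - mittagLeffler α 1 (-(lam * t ^ α))) := by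
  rcases eq_or_lt_of_le ht with rfl | ht'
  · rw [intervalIntegral.integral_same, mul_zero]
    have h0 : -(lam * (0:ℝ) ^ α) = 0 := by rw [Real.zero_rpow hα.ne']; ring
    rw [h0]
    have hE : mittagLeffler α 1 0 = 1 := by
      rw [mittagLeffler, tsum_eq_single 0 (fun k hk => by simp [zero_pow hk])]
      simp [Real.Gamma_one]
    rw [hE]; ring
  · set F : ℕ → ℝ → ℝ :=
      fun k τ => (t - τ) ^ (α - 1) * ((-(lam * τ ^ α)) ^ k / Real.Gamma (α * k + 1)) with hF
    have hΓα : 0 < Real.Gamma α := Real.Gamma_pos_of_pos hα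
    have hGk : ∀ k : ℕ, 0 < Real.Gamma (α * (k:ℝ) + 1) := fun k =>
      Real.Gamma_pos_of_pos (by positivity)
    have hGk' : ∀ k : ℕ, 0 < Real.Gamma (α * (k:ℝ) + α + 1) := fun k =>
      Real.Gamma_pos_of_pos (by positivity)
    have hck : ∀ k : ℕ, (-1:ℝ) < α * (k:ℝ) := fun k => by
      have := mul_nonneg hα.le (Nat.cast_nonneg (α := ℝ) k); linarith
    have hFeq : ∀ k : ℕ, ∀ τ ∈ Ioc (0:ℝ) t, F k τ
        = ((-lam) ^ k / Real.Gamma (α * (k:ℝ) + 1)) * (τ ^ (α * (k:ℝ)) * (t - τ) ^ (α - 1)) := by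
      intro k τ hτ
      have h1 : (-(lam * τ ^ α)) ^ k = (-lam) ^ k * τ ^ (α * (k:ℝ)) := by
        rw [show -(lam * τ ^ α) = (-lam) * τ ^ α by ring, mul_pow,
          ← Real.rpow_natCast (τ ^ α) k, ← Real.rpow_mul hτ.1.le]
      rw [hF]; dsimp only; rw [h1]; ring
    have hbetaI : ∀ k : ℕ, ∫ τ in Ioc (0:ℝ) t, τ ^ (α*(k:ℝ)) * (t - τ) ^ (α - 1)
        = Real.Gamma (α*(k:ℝ)+1) * Real.Gamma α / Real.Gamma (α*(k:ℝ)+α+1)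
          * (t ^ (α*(k:ℝ)) * t ^ α) := by
      intro k
      rw [← intervalIntegral.integral_of_le ht, beta_value (hck k) (by linarith) ht',
        show α*(k:ℝ)+(α-1)+2 = α*(k:ℝ)+α+1 by ring, show α*(k:ℝ)+(α-1)+1 = α*(k:ℝ)+α by ring,
        show α-1+1 = α by ring, Real.rpow_add ht']
    have hInt : ∀ k : ℕ, IntegrableOn (F k) (Ioc 0 t) volume := by
      intro k
      have hb : IntervalIntegrable
          (fun τ => ((-lam) ^ k / Real.Gamma (α * (k:ℝ) + 1)) * (τ ^ (α*(k:ℝ)) * (t - τ) ^ (α - 1)))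
          volume 0 t :=
        (beta_integrable (hck k) (by linarith) ht').const_mul _
      rw [intervalIntegrable_iff_integrableOn_Ioc_of_le ht] at hb
      exact hb.congr ((ae_restrict_iff' measurableSet_Ioc).mpr
        (ae_of_all _ fun τ hτ => (hFeq k τ hτ).symm))
    have hnormval : ∀ k : ℕ, ∫ τ in Ioc (0:ℝ) t, ‖F k τ‖
        = (Real.Gamma α * t ^ α) * ((lam * t ^ α) ^ k / Real.Gamma (α * (k:ℝ) + (α + 1))) := by
      intro k
      have h1 : ∫ τ in Ioc (0:ℝ) t, ‖F k τ‖
          = ∫ τ in Ioc (0:ℝ) t, (lam ^ k / Real.Gamma (α * (k:ℝ) + 1))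
              * (τ ^ (α*(k:ℝ)) * (t - τ) ^ (α - 1)) := by
        refine setIntegral_congr_fun measurableSet_Ioc fun τ hτ => ?_
        rw [Real.norm_eq_abs, hFeq k τ hτ, abs_mul, abs_div, abs_pow, abs_neg,
          abs_of_pos hlam, abs_of_pos (hGk k),
          abs_of_nonneg (mul_nonneg (Real.rpow_nonneg hτ.1.le _)
            (Real.rpow_nonneg (by linarith [hτ.2]) _))]
      rw [h1, MeasureTheory.integral_const_mul, hbetaI k]
      have hpk : (lam * t ^ α) ^ k = lam ^ k * t ^ (α*(k:ℝ)) := by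
        rw [mul_pow, ← Real.rpow_natCast (t ^ α) k, ← Real.rpow_mul ht]
      rw [hpk, show α * (k:ℝ) + (α + 1) = α*(k:ℝ)+α+1 by ring]
      field_simp [(hGk k).ne', (hGk' k).ne']
    have hsum : Summable (fun k : ℕ => ∫ τ in Ioc (0:ℝ) t, ‖F k τ‖) :=
      Summable.congr (((summable_gamma_ml hα (α+1) (lam * t ^ α)).mul_left
        (Real.Gamma α * t ^ α))) fun k => (hnormval k).symm
    have hswap : ∫ τ in Ioc (0:ℝ) t, (∑' k, F k τ) = ∑' k, ∫ τ in Ioc (0:ℝ) t, F k τ :=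
      (MeasureTheory.integral_tsum_of_summable_integral_norm hInt hsum).symm
    have hval : ∀ k : ℕ, ∫ τ in Ioc (0:ℝ) t, F k τ
        = Real.Gamma α * ((-lam) ^ k * t ^ (α*(k:ℝ)) * t ^ α / Real.Gamma (α * (k:ℝ) + α + 1)) := by
      intro k
      have h1 : ∫ τ in Ioc (0:ℝ) t, F k τ
          = ∫ τ in Ioc (0:ℝ) t, ((-lam) ^ k / Real.Gamma (α * (k:ℝ) + 1))
              * (τ ^ (α*(k:ℝ)) * (t - τ) ^ (α - 1)) :=
        setIntegral_congr_fun measurableSet_Ioc fun τ hτ => hFeq k τ hτ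
      rw [h1, MeasureTheory.integral_const_mul, hbetaI k]
      field_simp [(hGk k).ne', (hGk' k).ne']
    have hLHS : (1 / Real.Gamma α) *
          ∫ τ in (0:ℝ)..t, (t - τ) ^ (α - 1) * mittagLeffler α 1 (-(lam * τ ^ α))
        = ∑' k : ℕ, ((-lam) ^ k * t ^ (α*(k:ℝ)) * t ^ α / Real.Gamma (α * (k:ℝ) + α + 1)) := by
      have h1 : ∀ τ : ℝ, (t - τ) ^ (α - 1) * mittagLeffler α 1 (-(lam * τ ^ α))
          = ∑' k : ℕ, F k τ := by
        intro τ; rw [mittagLeffler, ← tsum_mul_left]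
      simp only [h1]
      rw [intervalIntegral.integral_of_le ht, hswap]
      have h2 : ∑' k : ℕ, ∫ τ in Ioc (0:ℝ) t, F k τ
          = Real.Gamma α * ∑' k : ℕ,
              ((-lam) ^ k * t ^ (α*(k:ℝ)) * t ^ α / Real.Gamma (α * (k:ℝ) + α + 1)) := by
        rw [← tsum_mul_left]; exact tsum_congr hval
      rw [h2]
      field_simp
      exact tsum_congr fun k => by ring
    have hSE : Summable (fun k : ℕ => (-(lam * t ^ α)) ^ k / Real.Gamma (α * k + 1)) :=
      summable_gamma_ml hα 1 _
    have hRHS : lam⁻¹ * (1 - mittagLeffler α 1 (-(lam * t ^ α)))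
        = ∑' k : ℕ, ((-lam) ^ k * t ^ (α*(k:ℝ)) * t ^ α / Real.Gamma (α * (k:ℝ) + α + 1)) := by
      rw [mittagLeffler, hSE.tsum_eq_zero_add]
      simp only [pow_zero, Nat.cast_zero, mul_zero, zero_add, Real.Gamma_one, div_one]
      have harith : ∀ S : ℝ, lam⁻¹ * (1 - (1 + S)) = -lam⁻¹ * S := fun S => by ring
      rw [harith, ← tsum_mul_left]
      apply tsum_congr
      intro k
      have hp : (-(lam * t ^ α)) ^ (k+1) = (-lam)^(k+1) * (t ^ (α * (k:ℝ)) * t ^ α) := by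
        rw [show -(lam * t ^ α) = (-lam) * t ^ α by ring, mul_pow,
          ← Real.rpow_natCast (t ^ α) (k+1), ← Real.rpow_mul ht]
        push_cast
        rw [show α*((k:ℝ)+1) = α*(k:ℝ)+α by ring, Real.rpow_add ht']
      rw [hp, show ((k+1:ℕ):ℝ) = (k:ℝ)+1 from by push_cast; ring,
        show α*((k:ℝ)+1)+1 = α*(k:ℝ)+α+1 by ring, pow_succ]
      field_simp [(hGk' k).ne']
    rw [hLHS, hRHS]
end

section
/- Let α > 0, λ > 0 and t ≥ 0. Then (1/Γ(α)) ∫₀ᵗ (t−τ)^{α−1} τ E_{α,2}(−λ τ^α) dτ = t λ^{−1}(1 − E_{α,2}(−λ t^α)); that is, I^α applied to τ ↦ τ E_{α,2}(−λ τ^α) equals t λ^{−1}(1 − E_{α,2}(−λ t^α)). -/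
open Real MeasureTheory intervalIntegral Filter



/-- Gamma growth from log-convexity: Γ(s+α) ≥ (s-1)^α Γ(s) for s > 1, α > 0. -/
lemma gamma_growth {s α : ℝ} (hs : 1 < s) (hα : 0 < α) :
    (s - 1) ^ α * Real.Gamma s ≤ Real.Gamma (s + α) := by
  have hs0 : (0:ℝ) < s - 1 := by linarith
  have hs0' : (0:ℝ) < s := by linarith
  have hΓ1 : 0 < Real.Gamma (s - 1) := Real.Gamma_pos_of_pos hs0
  have hΓ2 : 0 < Real.Gamma s := Real.Gamma_pos_of_pos hs0'
  have hΓ3 : 0 < Real.Gamma (s + α) := Real.Gamma_pos_of_pos (by linarith)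
  have hrec : Real.Gamma s = (s - 1) * Real.Gamma (s - 1) := by
    have := Real.Gamma_add_one (s := s - 1) hs0.ne'
    simpa using this
  have hslope := Real.convexOn_log_Gamma.slope_mono_adjacent
    (x := s - 1) (y := s) (z := s + α) (Set.mem_Ioi.2 hs0) (Set.mem_Ioi.2 (by linarith))
    (by linarith) (by linarith)
  simp only [Function.comp] at hslope
  have h1 : (Real.log (Real.Gamma s) - Real.log (Real.Gamma (s-1))) / (s - (s-1))
      = Real.log (s - 1) := by
    rw [hrec, Real.log_mul hs0.ne' hΓ1.ne']
    ring
  rw [h1] at hslope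
  have h2 : α * Real.log (s - 1) + Real.log (Real.Gamma s) ≤ Real.log (Real.Gamma (s + α)) := by
    have h3 : (s + α - s) = α := by ring
    rw [h3, le_div_iff₀ hα] at hslope
    nlinarith
  calc (s - 1) ^ α * Real.Gamma s
      = Real.exp (α * Real.log (s - 1) + Real.log (Real.Gamma s)) := by
        rw [Real.exp_add, Real.rpow_def_of_pos hs0, Real.exp_log hΓ2, mul_comm α]
    _ ≤ Real.exp (Real.log (Real.Gamma (s + α))) := Real.exp_le_exp.2 h2
    _ = Real.Gamma (s + α) := Real.exp_log hΓ3

/-- Summability of the Mittag-Leffler-type series. -/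
lemma ml_summable (α β x : ℝ) (hα : 0 < α) :
    Summable (fun k : ℕ => x ^ k / Real.Gamma (α * k + β)) := by
  apply summable_of_ratio_norm_eventually_le (r := 1/2) (by norm_num)
  have hbase : Tendsto (fun k : ℕ => α * (k:ℝ) + β - 1) atTop atTop := by
    have := tendsto_atTop_add_const_right atTop (β - 1)
      ((tendsto_natCast_atTop_atTop (R := ℝ)).const_mul_atTop hα)
    exact this.congr (fun k => by ring)
  have htend : Tendsto (fun k : ℕ => (α * (k:ℝ) + β - 1) ^ α) atTop atTop :=
    (tendsto_rpow_atTop hα).comp hbase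
  filter_upwards [hbase.eventually_ge_atTop 2, htend.eventually_ge_atTop (2 * |x|)]
    with k hk1 hk2
  have hs : (1:ℝ) < α * k + β := by linarith
  have hΓ : 0 < Real.Gamma (α * k + β) := Real.Gamma_pos_of_pos (by linarith)
  have heq : α * ((k:ℕ)+1 : ℕ) + β = (α * k + β) + α := by push_cast; ring
  have hΓ' : 0 < Real.Gamma (α * ↑(k+1) + β) := by
    rw [heq]; exact Real.Gamma_pos_of_pos (by linarith)
  have key : 2 * |x| * Real.Gamma (α * k + β) ≤ Real.Gamma (α * ↑(k+1) + β) := by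
    rw [heq]
    calc 2 * |x| * Real.Gamma (α * k + β)
        ≤ (α * k + β - 1) ^ α * Real.Gamma (α * k + β) :=
          mul_le_mul_of_nonneg_right hk2 hΓ.le
      _ ≤ _ := gamma_growth hs hα
  simp only [Real.norm_eq_abs, abs_div, abs_of_pos hΓ, abs_of_pos hΓ', pow_succ, abs_mul]
  rw [div_le_iff₀ hΓ']
  calc |x ^ k| * |x|
      = 1/2 * (|x ^ k| / Real.Gamma (α * k + β)) * (2 * |x| * Real.Gamma (α * k + β)) := by
        field_simp
    _ ≤ 1/2 * (|x ^ k| / Real.Gamma (α * k + β)) * Real.Gamma (α * ↑(k+1) + β) :=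
        mul_le_mul_of_nonneg_left key (by positivity)


lemma real_beta {a b t : ℝ} (ha : 0 < a) (hb : 0 < b) (ht : 0 < t) :
    ∫ τ in (0:ℝ)..t, τ ^ (b - 1) * (t - τ) ^ (a - 1)
      = Real.Gamma a * Real.Gamma b / Real.Gamma (a + b) * t ^ (a + b - 1) := by
  have hΓne : Complex.Gamma ((b:ℂ) + a) ≠ 0 := by
    rw [← Complex.ofReal_add, Complex.Gamma_ofReal]
    exact_mod_cast (Real.Gamma_pos_of_pos (by linarith : (0:ℝ) < b + a)).ne'
  have hbeta : Complex.betaIntegral b a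
      = Complex.Gamma b * Complex.Gamma a / Complex.Gamma ((b:ℂ) + a) := by
    rw [Complex.Gamma_mul_Gamma_eq_betaIntegral (by simpa using hb) (by simpa using ha),
      mul_div_cancel_left₀ _ hΓne]
  have hc := Complex.betaIntegral_scaled (b:ℂ) (a:ℂ) ht
  have hint : (∫ x in (0:ℝ)..t, (x:ℂ) ^ ((b:ℂ) - 1) * ((t:ℂ) - x) ^ ((a:ℂ) - 1))
      = ((∫ τ in (0:ℝ)..t, τ ^ (b-1) * (t - τ) ^ (a-1) : ℝ) : ℂ) := by
    rw [← intervalIntegral.integral_ofReal]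
    apply intervalIntegral.integral_congr
    intro x hx
    rw [Set.uIcc_of_le ht.le] at hx
    simp only [Complex.ofReal_mul]
    rw [Complex.ofReal_cpow hx.1, Complex.ofReal_cpow (by linarith [hx.2] : (0:ℝ) ≤ t - x)]
    push_cast
    ring
  have hrhs : ((Real.Gamma a * Real.Gamma b / Real.Gamma (a+b) * t^(a+b-1) : ℝ) : ℂ)
      = (t:ℂ) ^ ((b:ℂ) + (a:ℂ) - 1)
        * (Complex.Gamma b * Complex.Gamma a / Complex.Gamma ((b:ℂ) + a)) := by
    rw [Complex.ofReal_mul, Complex.ofReal_cpow ht.le, Complex.ofReal_div,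
      Complex.ofReal_mul, ← Complex.Gamma_ofReal, ← Complex.Gamma_ofReal, ← Complex.Gamma_ofReal]
    push_cast
    ring
  apply Complex.ofReal_injective
  rw [← hint, hc, hbeta, hrhs]

lemma beta_intervalIntegrable {a c t : ℝ} (ha : 0 < a) (hc : 0 ≤ c) (ht : 0 < t) :
    IntervalIntegrable (fun τ => (t - τ) ^ (a - 1) * τ ^ c) volume 0 t := by
  have h1 : IntervalIntegrable (fun τ : ℝ => (t - τ) ^ (a - 1)) volume 0 t := by
    have := (intervalIntegrable_rpow' (a := 0) (b := t) (by linarith : (-1:ℝ) < a - 1)).comp_sub_left t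
    simpa using this.symm
  exact h1.mul_continuousOn (Continuous.continuousOn (Real.continuous_rpow_const hc))


/-- For `α > 0`, `λ > 0` and `t ≥ 0`,
`(1/Γ(α)) ∫₀ᵗ (t−τ)^{α−1} τ E_{α,2}(−λ τ^α) dτ = t λ⁻¹ (1 − E_{α,2}(−λ t^α))`. -/
theorem RL_integral_mittagLeffler_two (α lam t : ℝ) (hα : 0 < α) (hlam : 0 < lam)
    (ht : 0 ≤ t) :
    (1 / Real.Gamma α) *
        ∫ τ in (0:ℝ)..t, (t - τ) ^ (α - 1) * (τ * mittagLeffler α 2 (-(lam * τ ^ α)))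
      = t * lam⁻¹ * (1 - mittagLeffler α 2 (-(lam * t ^ α))) := by
  have hΓα : 0 < Real.Gamma α := Real.Gamma_pos_of_pos hα
  rcases eq_or_lt_of_le ht with rfl | ht'
  · simp
  -- now 0 < t
  set F : ℕ → ℝ → ℝ :=
    fun k τ => (-lam)^k / Real.Gamma (α*k+2) * ((t - τ)^(α-1) * τ^(α*k+1)) with hF
  have hΓk : ∀ k : ℕ, 0 < Real.Gamma (α*k+2) :=
    fun k => Real.Gamma_pos_of_pos (by positivity)
  -- pointwise identity on [0, t]
  have hpt : ∀ τ ∈ Set.uIcc (0:ℝ) t,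
      (t - τ)^(α-1) * (τ * mittagLeffler α 2 (-(lam * τ^α))) = ∑' k, F k τ := by
    intro τ hτ
    rw [Set.uIcc_of_le ht] at hτ
    rcases eq_or_lt_of_le hτ.1 with rfl | hτ0
    · have hz : ∀ k : ℕ, F k 0 = 0 := fun k => by
        simp [hF, Real.zero_rpow (by positivity : α*(k:ℝ)+1 ≠ 0)]
      simp [hz, tsum_zero]
    · have h1 : (t - τ)^(α-1) * (τ * mittagLeffler α 2 (-(lam * τ^α)))
          = ((t - τ)^(α-1) * τ) * mittagLeffler α 2 (-(lam * τ^α)) := by ring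
      rw [h1, mittagLeffler, ← tsum_mul_left]
      apply tsum_congr
      intro k
      have hp : (-(lam * τ^α))^k = (-lam)^k * τ^(α*k) := by
        rw [show -(lam * τ^α) = (-lam) * τ^α by ring, mul_pow,
          ← Real.rpow_natCast (τ^α) k, ← Real.rpow_mul hτ.1]
      rw [hp, hF]
      have hτ1 : τ^(α*(k:ℝ)+1) = τ^(α*(k:ℝ)) * τ := by
        rw [Real.rpow_add_one hτ0.ne']
      simp only []
      rw [hτ1]
      field_simp
  -- the beta integral values
  have hbetaval : ∀ k : ℕ, (∫ τ in (0:ℝ)..t, (t-τ)^(α-1) * τ^(α*k+1))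
      = Real.Gamma α * Real.Gamma (α*k+2) / Real.Gamma (α*((k:ℝ)+1)+2)
        * t^(α*((k:ℝ)+1)+1) := by
    intro k
    have h1 : (∫ τ in (0:ℝ)..t, (t-τ)^(α-1) * τ^(α*k+1))
        = ∫ τ in (0:ℝ)..t, τ^((α*k+2)-1) * (t-τ)^(α-1) := by
      apply intervalIntegral.integral_congr
      intro x _
      rw [show α*(k:ℝ)+2-1 = α*k+1 by ring]
      ring
    rw [h1, real_beta hα (by positivity : (0:ℝ) < α*k+2) ht',
      show α + (α*(k:ℝ)+2) - 1 = α*((k:ℝ)+1)+1 by ring,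
      show α + (α*(k:ℝ)+2) = α*((k:ℝ)+1)+2 by ring]
  -- integrability
  have hFint : ∀ k : ℕ, IntegrableOn (F k) (Set.Ioc 0 t) volume := by
    intro k
    have h := (beta_intervalIntegrable hα (by positivity : (0:ℝ) ≤ α*k+1) ht').const_mul
      ((-lam)^k / Real.Gamma (α*k+2))
    exact (intervalIntegrable_iff_integrableOn_Ioc_of_le ht).mp h
  -- norm integrals
  have hnormval : ∀ k : ℕ, (∫ τ in Set.Ioc (0:ℝ) t, ‖F k τ‖)
      = (Real.Gamma α * t^(α+1)) * ((lam*t^α)^k / Real.Gamma (α*k+(α+2))) := by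
    intro k
    have h1 : (∫ τ in Set.Ioc (0:ℝ) t, ‖F k τ‖)
        = ∫ τ in Set.Ioc (0:ℝ) t, lam^k / Real.Gamma (α*k+2) * ((t - τ)^(α-1) * τ^(α*k+1)) := by
      apply setIntegral_congr_fun measurableSet_Ioc
      intro τ hτ
      have h2 : (0:ℝ) ≤ (t - τ)^(α-1) * τ^(α*k+1) :=
        mul_nonneg (Real.rpow_nonneg (by linarith [hτ.2]) _) (Real.rpow_nonneg hτ.1.le _)
      rw [hF]
      have h3 : (0:ℝ) ≤ (t - τ)^(α-1) := Real.rpow_nonneg (by linarith [hτ.2]) _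
      have h4 : (0:ℝ) ≤ τ^(α*(k:ℝ)+1) := Real.rpow_nonneg hτ.1.le _
      simp only [norm_mul, Real.norm_eq_abs, abs_div, abs_pow, abs_neg,
        abs_of_pos hlam, abs_of_pos (hΓk k), abs_of_nonneg h3, abs_of_nonneg h4]
    rw [h1, ← intervalIntegral.integral_of_le ht, intervalIntegral.integral_const_mul,
      hbetaval k]
    have hexp : t^(α*((k:ℝ)+1)+1) = t^(α+1) * (t^α)^k := by
      rw [← Real.rpow_natCast (t^α) k, ← Real.rpow_mul ht, ← Real.rpow_add ht']
      ring_nf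
    rw [hexp, mul_pow, show α*(k:ℝ)+(α+2) = α*((k:ℝ)+1)+2 by ring]
    field_simp
  have hsumnorm : Summable (fun k : ℕ => ∫ τ in Set.Ioc (0:ℝ) t, ‖F k τ‖) := by
    rw [show (fun k : ℕ => ∫ τ in Set.Ioc (0:ℝ) t, ‖F k τ‖)
      = fun k : ℕ => (Real.Gamma α * t^(α+1)) * ((lam*t^α)^k / Real.Gamma (α*k+(α+2)))
      from funext hnormval]
    exact (ml_summable α (α+2) (lam*t^α) hα).mul_left _
  -- swap sum and integral
  have hswap : (∫ τ in Set.Ioc (0:ℝ) t, ∑' k, F k τ)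
      = ∑' k, ∫ τ in Set.Ioc (0:ℝ) t, F k τ :=
    (MeasureTheory.integral_tsum_of_summable_integral_norm hFint hsumnorm).symm
  -- value of each integral
  have hval : ∀ k : ℕ, (∫ τ in Set.Ioc (0:ℝ) t, F k τ)
      = (-lam)^k / Real.Gamma (α*k+2)
        * (Real.Gamma α * Real.Gamma (α*k+2) / Real.Gamma (α*((k:ℝ)+1)+2)
          * t^(α*((k:ℝ)+1)+1)) := by
    intro k
    rw [← intervalIntegral.integral_of_le ht, hF]
    rw [intervalIntegral.integral_const_mul, hbetaval k]
  -- assemble the left-hand side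
  have hLHS : (1 / Real.Gamma α) *
      (∫ τ in (0:ℝ)..t, (t - τ) ^ (α - 1) * (τ * mittagLeffler α 2 (-(lam * τ ^ α))))
      = ∑' k : ℕ, (-lam)^k * t^(α*((k:ℝ)+1)+1) / Real.Gamma (α*((k:ℝ)+1)+2) := by
    rw [intervalIntegral.integral_congr hpt, intervalIntegral.integral_of_le ht, hswap,
      ← tsum_mul_left]
    apply tsum_congr
    intro k
    rw [hval k]
    have h2 : Real.Gamma (α*(k:ℝ)+2) ≠ 0 := (hΓk k).ne'
    field_simp
  rw [hLHS]
  -- the right-hand side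
  have hsumE : Summable (fun k : ℕ => (-(lam * t^α))^k / Real.Gamma (α*k+2)) :=
    ml_summable α 2 _ hα
  have hE : mittagLeffler α 2 (-(lam * t^α))
      = 1 + ∑' k : ℕ, (-(lam * t^α))^(k+1) / Real.Gamma (α*((k:ℝ)+1)+2) := by
    rw [mittagLeffler, Summable.tsum_eq_zero_add hsumE]
    norm_num [Real.Gamma_two]
  rw [hE]
  have h3 : t * lam⁻¹ * (1 - (1 + ∑' k : ℕ, (-(lam * t^α))^(k+1) / Real.Gamma (α*((k:ℝ)+1)+2)))
      = ∑' k : ℕ, (-(t * lam⁻¹)) * ((-(lam * t^α))^(k+1) / Real.Gamma (α*((k:ℝ)+1)+2)) := by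
    rw [tsum_mul_left]
    ring
  rw [h3]
  apply tsum_congr
  intro k
  have hp : (-(lam * t^α))^(k+1) = (-lam)^(k+1) * t^(α*((k:ℝ)+1)) := by
    rw [show -(lam * t^α) = (-lam) * t^α by ring, mul_pow,
      ← Real.rpow_natCast (t^α) (k+1), ← Real.rpow_mul ht]
    push_cast
    ring_nf
  rw [hp]
  have ht1 : t^(α*((k:ℝ)+1)+1) = t^(α*((k:ℝ)+1)) * t := by
    rw [Real.rpow_add_one ht'.ne']
  rw [ht1, pow_succ]
  field_simp
end

section
/- Let α > 0, λ > 0, T > 0 and let v : [0,T] → ℝ be continuous. If v(t) + λ (1/Γ(α)) ∫₀ᵗ (t−τ)^{α−1} v(τ) dτ = 0 for every t ∈ [0,T], then v(t) = 0 for every t ∈ [0,T]. -/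
open Set MeasureTheory intervalIntegral

private lemma ker_intervalIntegrable {α : ℝ} (hα : 0 < α) (x t : ℝ) :
    IntervalIntegrable (fun τ => (t - τ) ^ (α - 1)) volume x t := by
  have h := (intervalIntegral.intervalIntegrable_rpow' (a := t - x) (b := 0)
      (by linarith : (-1:ℝ) < α - 1)).comp_sub_left t
  simpa using h

private lemma ker_integral {α : ℝ} (hα : 0 < α) (x t : ℝ) :
    ∫ τ in x..t, (t - τ) ^ (α - 1) = (t - x) ^ α / α := by
  rw [intervalIntegral.integral_comp_sub_left (fun s => s ^ (α - 1)) t]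
  simp only [sub_self]
  rw [integral_rpow (Or.inl (by linarith : (-1:ℝ) < α - 1))]
  have h1 : α - 1 + 1 = α := by ring
  rw [h1, Real.zero_rpow hα.ne', sub_zero]

private lemma prod_intervalIntegrable {α T : ℝ} (hα : 0 < α) {v : ℝ → ℝ}
    (hv : ContinuousOn v (Set.Icc 0 T)) {t : ℝ} (ht0 : 0 ≤ t) (htT : t ≤ T) :
    IntervalIntegrable (fun τ => (t - τ) ^ (α - 1) * v τ) volume 0 t := by
  obtain ⟨M0, hM0⟩ := isCompact_Icc.exists_bound_of_continuousOn hv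
  rw [intervalIntegrable_iff_integrableOn_Ioc_of_le ht0]
  have hsub : Set.Ioc (0:ℝ) t ⊆ Set.Icc 0 T := fun τ hτ => ⟨hτ.1.le, hτ.2.trans htT⟩
  have hker : IntegrableOn (fun τ => M0 * (t - τ) ^ (α - 1)) (Set.Ioc 0 t) volume := by
    have := ((ker_intervalIntegrable hα 0 t).const_mul M0)
    rwa [intervalIntegrable_iff_integrableOn_Ioc_of_le ht0] at this
  apply Integrable.mono' hker
  · exact (((measurable_const.sub measurable_id).pow measurable_const).aestronglyMeasurable).mul
      ((hv.mono hsub).aestronglyMeasurable measurableSet_Ioc)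
  · filter_upwards [ae_restrict_mem measurableSet_Ioc] with τ hτ
    have h1 : (0:ℝ) ≤ (t - τ) ^ (α - 1) := Real.rpow_nonneg (by linarith [hτ.2]) _
    have h2 : |v τ| ≤ M0 := hM0 τ (hsub hτ)
    calc ‖(t - τ) ^ (α - 1) * v τ‖ = (t - τ) ^ (α - 1) * |v τ| := by
          rw [Real.norm_eq_abs, abs_mul, abs_of_nonneg h1]
      _ ≤ (t - τ) ^ (α - 1) * M0 := by
          exact mul_le_mul_of_nonneg_left h2 h1
      _ = M0 * (t - τ) ^ (α - 1) := mul_comm _ _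

/-- Let `α > 0`, `λ > 0`, `T > 0` and `v : [0,T] → ℝ` be continuous.
If `v(t) + λ (1/Γ(α)) ∫₀ᵗ (t−τ)^{α−1} v(τ) dτ = 0` for every `t ∈ [0,T]`,
then `v` vanishes identically on `[0,T]`. -/
theorem fractional_volterra_unique (α lam T : ℝ) (hα : 0 < α) (hlam : 0 < lam) (hT : 0 < T)
    (v : ℝ → ℝ) (hv : ContinuousOn v (Set.Icc 0 T))
    (heq : ∀ t ∈ Set.Icc (0:ℝ) T,
      v t + lam * ((1 / Real.Gamma α) * ∫ τ in (0:ℝ)..t, (t - τ) ^ (α - 1) * v τ) = 0) :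
    ∀ t ∈ Set.Icc (0:ℝ) T, v t = 0 := by
  have hΓ : 0 < Real.Gamma α := Real.Gamma_pos_of_pos hα
  set c : ℝ := lam * (1 / Real.Gamma α) with hcdef
  have hc : 0 < c := by positivity
  have hveq : ∀ t ∈ Set.Icc (0:ℝ) T,
      v t = -(c * ∫ τ in (0:ℝ)..t, (t - τ) ^ (α - 1) * v τ) := by
    intro t ht
    have h := heq t ht
    have : lam * ((1 / Real.Gamma α) * ∫ τ in (0:ℝ)..t, (t - τ) ^ (α - 1) * v τ)
        = c * ∫ τ in (0:ℝ)..t, (t - τ) ^ (α - 1) * v τ := by rw [hcdef, mul_assoc]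
    linarith [this ▸ h]
  set δ : ℝ := (α / (2 * c)) ^ (1 / α) with hδdef
  have hδ : 0 < δ := Real.rpow_pos_of_pos (by positivity) _
  have hδα : δ ^ α = α / (2 * c) := by
    rw [hδdef, ← Real.rpow_mul (by positivity : (0:ℝ) ≤ α / (2 * c)), one_div,
      inv_mul_cancel₀ hα.ne', Real.rpow_one]
  have hhalf : c * δ ^ α / α = 1 / 2 := by
    rw [hδα]; field_simp
  -- key continuation step
  have key : ∀ a : ℝ, 0 ≤ a → a ≤ T → (∀ s ∈ Set.Icc (0:ℝ) a, v s = 0) →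
      ∀ t ∈ Set.Icc a (min (a + δ) T), v t = 0 := by
    intro a ha0 haT hza
    set b := min (a + δ) T with hbdef
    have hab : a ≤ b := le_min (by linarith) haT
    have hbT : b ≤ T := min_le_right _ _
    have hsub : Set.Icc a b ⊆ Set.Icc 0 T := fun s hs => ⟨ha0.trans hs.1, hs.2.trans hbT⟩
    obtain ⟨t0, ht0m, hmax⟩ := isCompact_Icc.exists_isMaxOn (Set.nonempty_Icc.2 hab)
      ((hv.mono hsub).abs)
    have hM : ∀ s ∈ Set.Icc a b, |v s| ≤ |v t0| := fun s hs => hmax hs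
    set M := |v t0| with hMdef
    have hM0 : 0 ≤ M := abs_nonneg _
    have hbound : ∀ t ∈ Set.Icc a b, |v t| ≤ M / 2 := by
      intro t ht
      have hat : a ≤ t := ht.1
      have htb : t ≤ b := ht.2
      have htT : t ≤ T := htb.trans hbT
      have ht0' : 0 ≤ t := ha0.trans hat
      have hi : IntervalIntegrable (fun τ => (t - τ) ^ (α - 1) * v τ) volume 0 t :=
        prod_intervalIntegrable hα hv ht0' htT
      have hi1 : IntervalIntegrable (fun τ => (t - τ) ^ (α - 1) * v τ) volume 0 a :=
        hi.mono_set (by rw [Set.uIcc_of_le ha0, Set.uIcc_of_le ht0']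
                        exact Set.Icc_subset_Icc le_rfl hat)
      have hi2 : IntervalIntegrable (fun τ => (t - τ) ^ (α - 1) * v τ) volume a t :=
        hi.mono_set (by rw [Set.uIcc_of_le hat, Set.uIcc_of_le ht0']
                        exact Set.Icc_subset_Icc ha0 le_rfl)
      have hsplit : (∫ τ in (0:ℝ)..t, (t - τ) ^ (α - 1) * v τ)
          = (∫ τ in (0:ℝ)..a, (t - τ) ^ (α - 1) * v τ)
            + ∫ τ in a..t, (t - τ) ^ (α - 1) * v τ :=
        (intervalIntegral.integral_add_adjacent_intervals hi1 hi2).symm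
      have hz1 : (∫ τ in (0:ℝ)..a, (t - τ) ^ (α - 1) * v τ) = 0 := by
        rw [show (fun τ => (t - τ) ^ (α - 1) * v τ) = fun τ => (t - τ) ^ (α - 1) * v τ from rfl]
        rw [intervalIntegral.integral_congr (g := fun _ => (0:ℝ))]
        · simp
        · intro τ hτ
          rw [Set.uIcc_of_le ha0] at hτ
          simp [hza τ hτ]
      have hnorm : |∫ τ in a..t, (t - τ) ^ (α - 1) * v τ|
          ≤ ∫ τ in a..t, (t - τ) ^ (α - 1) * M := by
        calc |∫ τ in a..t, (t - τ) ^ (α - 1) * v τ|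
            ≤ ∫ τ in a..t, |(t - τ) ^ (α - 1) * v τ| := by
              simpa only [Real.norm_eq_abs] using
                intervalIntegral.norm_integral_le_integral_norm
                  (f := fun τ => (t - τ) ^ (α - 1) * v τ) (μ := volume) hat
          _ ≤ ∫ τ in a..t, (t - τ) ^ (α - 1) * M := by
              apply intervalIntegral.integral_mono_on hat hi2.abs
                ((ker_intervalIntegrable hα a t).mul_const M)
              intro τ hτ
              have h1 : (0:ℝ) ≤ (t - τ) ^ (α - 1) := Real.rpow_nonneg (by linarith [hτ.2]) _
              have h2 : |v τ| ≤ M := hM τ ⟨hτ.1, hτ.2.trans htb⟩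
              rw [abs_mul, abs_of_nonneg h1]
              exact mul_le_mul_of_nonneg_left h2 h1
      have hker : (∫ τ in a..t, (t - τ) ^ (α - 1) * M) = (t - a) ^ α / α * M := by
        rw [intervalIntegral.integral_mul_const, ker_integral hα]
      have hta : t - a ≤ δ := by
        rcases min_cases (a + δ) T with ⟨h1, _⟩ | ⟨h1, h2⟩
        · rw [hbdef, h1] at htb; linarith
        · rw [hbdef, h1] at htb; linarith
      have hpow : (t - a) ^ α ≤ δ ^ α :=
        Real.rpow_le_rpow (by linarith) hta hα.le
      have hvt : v t = -(c * ∫ τ in (0:ℝ)..t, (t - τ) ^ (α - 1) * v τ) :=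
        hveq t ⟨ht0', htT⟩
      calc |v t| = c * |∫ τ in a..t, (t - τ) ^ (α - 1) * v τ| := by
            rw [hvt, hsplit, hz1, zero_add, abs_neg, abs_mul, abs_of_nonneg hc.le]
        _ ≤ c * ((t - a) ^ α / α * M) := by
            rw [← hker]; exact mul_le_mul_of_nonneg_left hnorm hc.le
        _ ≤ c * (δ ^ α / α * M) := by
            apply mul_le_mul_of_nonneg_left _ hc.le
            apply mul_le_mul_of_nonneg_right _ hM0
            gcongr
        _ = c * δ ^ α / α * M := by ring
        _ = M / 2 := by rw [hhalf]; ring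
    have hMz : M = 0 := by
      have := hbound t0 ht0m
      rw [← hMdef] at this
      linarith
    intro t ht
    have := hbound t ht
    rw [hMz] at this
    have h0 := abs_nonneg (v t)
    have : |v t| = 0 := by linarith
    exact abs_eq_zero.mp this
  -- induction
  have main : ∀ n : ℕ, ∀ t ∈ Set.Icc (0:ℝ) (min ((n:ℝ) * δ) T), v t = 0 := by
    intro n
    induction n with
    | zero =>
      intro t ht
      simp only [Nat.cast_zero, zero_mul, min_eq_left hT.le] at ht  -- min 0 T = 0
      have ht0 : t = 0 := le_antisymm ht.2 ht.1
      subst ht0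
      have := hveq 0 ⟨le_refl 0, hT.le⟩
      simpa using this
    | succ n ih =>
      intro t ht
      set a := min ((n:ℝ) * δ) T with hadef
      have ha0 : 0 ≤ a := le_min (by positivity) hT.le
      have haT : a ≤ T := min_le_right _ _
      by_cases hta : t ≤ a
      · exact ih t ⟨ht.1, hta⟩
      · push_neg at hta
        have htT : t ≤ T := ht.2.trans (min_le_right _ _)
        have htd : t ≤ a + δ := by
          rcases le_total ((n:ℝ) * δ) T with h | h
          · have : a = (n:ℝ) * δ := min_eq_left h
            have h2 : t ≤ ((n:ℝ) + 1) * δ := ht.2.trans (by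
              rw [Nat.cast_succ] at *
              exact min_le_left _ _)
            rw [this]; push_cast at h2 ⊢; nlinarith
          · have : a = T := min_eq_right h
            rw [this] at hta; linarith
        exact key a ha0 haT (fun s hs => ih s hs) t ⟨hta.le, le_min htd htT⟩
  intro t ht
  obtain ⟨n, hn⟩ := exists_nat_ge (T / δ)
  have hTn : T ≤ (n:ℝ) * δ := by
    rw [div_le_iff₀ hδ] at hn; linarith
  have := main n t
  rw [min_eq_right hTn] at this
  exact this ht
end
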